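/- Every monomial order can be represented on a finite set of terms by a single weight vector: for any monomial order ⪯ on ℕ^n and any finite set S of exponent vectors, there exists a weight vector w ∈ ℕ^n with every coordinate positive such that for all u, t ∈ S, u ≺ t implies w·u < w·t; consequently, for all distinct u, t ∈ S, u ≺ t if and only if w·u < w·t. -/

import Mathlib

open scoped MonomialOrder

/-- Gordan's theorem: if no nontrivial nonnegative integer combination of the
vectors `v i` is componentwise `≤ 0`, then there is a rational `w` with
`w · v i > 0` for all `i`. -/
theorem gordan (n : ℕ) : ∀ (ι : Type) [Fintype ι] (v : ι → Fin n → ℤ),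
    (∀ a : ι → ℕ, (∀ k, ∑ i, (a i : ℤ) * v i k ≤ 0) → ∀ i, a i = 0) →
    ∃ w : Fin n → ℚ, ∀ i, 0 < ∑ k, w k * (v i k : ℚ) := by
  induction n with
  | zero =>
    intro ι _ v H
    classical
    refine ⟨0, fun i => ?_⟩
    exfalso
    have := H (fun j => if j = i then 1 else 0) (fun k => k.elim0) i
    simp at this
  | succ n ih =>
    intro ι _ v H
    classical
    set Z := {i : ι // v i 0 = 0} with hZ
    set P := {i : ι // 0 < v i 0} with hP
    set N := {i : ι // v i 0 < 0} with hN
    set ι' := Z ⊕ P × N with hι'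
    set v' : ι' → Fin n → ℤ := fun i' k =>
      match i' with
      | .inl z => v z.1 k.succ
      | .inr (p, q) => (-(v q.1 0)) * v p.1 k.succ + v p.1 0 * v q.1 k.succ
      with hv'
    -- coefficients transfer
    set c : ι' → ι → ℕ := fun i' i =>
      match i' with
      | .inl z => if z.1 = i then 1 else 0
      | .inr (p, q) => (if p.1 = i then (-(v q.1 0)).toNat else 0) +
          (if q.1 = i then (v p.1 0).toNat else 0)
      with hc
    have hcv : ∀ i' k, ∑ i, (c i' i : ℤ) * v i k =
        match i' with
        | .inl z => v z.1 k
        | .inr (p, q) => (-(v q.1 0)) * v p.1 k + v p.1 0 * v q.1 k := by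
      rintro (z | ⟨p, q⟩) k
      · simp [hc, Finset.sum_ite_eq, apply_ite (Nat.cast : ℕ → ℤ)]
      · have h1 : ((-(v q.1 0)).toNat : ℤ) = -(v q.1 0) :=
          Int.toNat_of_nonneg (neg_nonneg.mpr q.2.le)
        have h2 : ((v p.1 0).toNat : ℤ) = v p.1 0 := Int.toNat_of_nonneg p.2.le
        simp [hc, add_mul, Finset.sum_add_distrib, Finset.sum_ite_eq,
          apply_ite (Nat.cast : ℕ → ℤ), h1, h2]
    have H' : ∀ a' : ι' → ℕ, (∀ k, ∑ i', (a' i' : ℤ) * v' i' k ≤ 0) → ∀ i', a' i' = 0 := by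
      intro a' ha'
      set a : ι → ℕ := fun i => ∑ i', a' i' * c i' i with ha
      have key : ∀ k : Fin (n+1), ∑ i, (a i : ℤ) * v i k =
          ∑ i', (a' i' : ℤ) * ∑ i, (c i' i : ℤ) * v i k := by
        intro k
        simp only [ha]
        push_cast
        simp only [Finset.sum_mul, Finset.mul_sum, mul_assoc]
        rw [Finset.sum_comm]
      have hle : ∀ k, ∑ i, (a i : ℤ) * v i k ≤ 0 := by
        intro k
        rw [key k]
        induction k using Fin.cases with
        | zero =>
          apply le_of_eq
          apply Finset.sum_eq_zero
          rintro (z | ⟨p, q⟩) _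
          · rw [hcv (Sum.inl z) 0]
            simp [z.2]
          · rw [hcv (Sum.inr (p, q)) 0]
            ring
        | succ j =>
          refine le_trans (le_of_eq (Finset.sum_congr rfl ?_)) (ha' j)
          rintro (z | ⟨p, q⟩) _
          · rw [hcv (Sum.inl z) j.succ]
          · rw [hcv (Sum.inr (p, q)) j.succ]
      have hzero := H a hle
      rintro (z | ⟨p, q⟩)
      · have h0 := hzero z.1
        rw [ha] at h0
        have := (Finset.sum_eq_zero_iff).mp h0 (.inl z) (Finset.mem_univ _)
        simpa [hc] using this
      · have h0 := hzero p.1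
        rw [ha] at h0
        have h1 := (Finset.sum_eq_zero_iff).mp h0 (.inr (p, q)) (Finset.mem_univ _)
        have hne : q.1 ≠ p.1 := by
          intro h
          have := q.2
          rw [h] at this
          exact absurd p.2 (not_lt.mpr this.le)
        have hpos : 0 < (-(v q.1 0)).toNat := by
          have := q.2
          omega
        have hcval : c (.inr (p, q)) p.1 ≠ 0 := by
          simp only [hc, eq_self_iff_true, if_true, if_pos rfl, if_neg hne, add_zero, ne_eq, Int.toNat_eq_zero,
            not_le, neg_pos]
          exact q.2
        rcases Nat.mul_eq_zero.mp h1 with h1 | h1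
        · exact h1
        · exact absurd h1 hcval
    obtain ⟨w', hw'⟩ := ih ι' v' H'
    set d : ι → ℚ := fun i => ∑ k : Fin n, w' k * (v i k.succ : ℚ) with hd
    have hz : ∀ z : Z, 0 < d z.1 := fun z => hw' (.inl z)
    have hpq : ∀ (p : P) (q : N),
        0 < (-(v q.1 0) : ℚ) * d p.1 + (v p.1 0 : ℚ) * d q.1 := by
      intro p q
      have h := hw' (.inr (p, q))
      have heq : ∑ k, w' k * ((v' (.inr (p, q)) k : ℤ) : ℚ) =
          (-(v q.1 0) : ℚ) * d p.1 + (v p.1 0 : ℚ) * d q.1 := by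
        simp only [hv', hd]
        push_cast
        rw [Finset.mul_sum, Finset.mul_sum, ← Finset.sum_add_distrib]
        apply Finset.sum_congr rfl
        intro k _
        ring
      rw [heq] at h
      exact h
    have hcross : ∀ (p : P) (q : N),
        -(d p.1) / ((v p.1 0 : ℤ) : ℚ) < d q.1 / ((-(v q.1 0) : ℤ) : ℚ) := by
      intro p q
      have hp : (0 : ℚ) < ((v p.1 0 : ℤ) : ℚ) := by exact_mod_cast p.2
      have hq : (0 : ℚ) < ((-(v q.1 0) : ℤ) : ℚ) := by
        have := q.2
        push_cast
        linarith [show ((v q.1 0 : ℤ) : ℚ) < 0 by exact_mod_cast q.2]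
      rw [div_lt_div_iff₀ hp hq]
      have := hpq p q
      push_cast at *
      nlinarith
    have ht : ∃ t : ℚ, (∀ p : P, -(d p.1) / ((v p.1 0 : ℤ) : ℚ) < t) ∧
        (∀ q : N, t < d q.1 / ((-(v q.1 0) : ℤ) : ℚ)) := by
      rcases isEmpty_or_nonempty P with hP0 | hP1
      · rcases isEmpty_or_nonempty N with hN0 | hN1
        · exact ⟨0, fun p => (hP0.false p).elim, fun q => (hN0.false q).elim⟩
        · set u := Finset.univ.image (fun q : N => d q.1 / ((-(v q.1 0) : ℤ) : ℚ)) with hu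
          have hune : u.Nonempty := ⟨_, Finset.mem_image_of_mem _
            (Finset.mem_univ hN1.some)⟩
          refine ⟨u.min' hune - 1, fun p => (hP0.false p).elim, fun q => ?_⟩
          have := Finset.min'_le u _ (Finset.mem_image_of_mem
            (fun q : N => d q.1 / ((-(v q.1 0) : ℤ) : ℚ)) (Finset.mem_univ q))
          linarith
      · rcases isEmpty_or_nonempty N with hN0 | hN1
        · set l := Finset.univ.image (fun p : P => -(d p.1) / ((v p.1 0 : ℤ) : ℚ)) with hl
          have hlne : l.Nonempty := ⟨_, Finset.mem_image_of_mem _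
            (Finset.mem_univ hP1.some)⟩
          refine ⟨l.max' hlne + 1, fun p => ?_, fun q => (hN0.false q).elim⟩
          have := Finset.le_max' l _ (Finset.mem_image_of_mem
            (fun p : P => -(d p.1) / ((v p.1 0 : ℤ) : ℚ)) (Finset.mem_univ p))
          linarith
        · set l := Finset.univ.image (fun p : P => -(d p.1) / ((v p.1 0 : ℤ) : ℚ)) with hl
          set u := Finset.univ.image (fun q : N => d q.1 / ((-(v q.1 0) : ℤ) : ℚ)) with hu
          have hlne : l.Nonempty := ⟨_, Finset.mem_image_of_mem _
            (Finset.mem_univ hP1.some)⟩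
          have hune : u.Nonempty := ⟨_, Finset.mem_image_of_mem _
            (Finset.mem_univ hN1.some)⟩
          have hlu : l.max' hlne < u.min' hune := by
            obtain ⟨p, -, hpeq⟩ := Finset.mem_image.mp (l.max'_mem hlne)
            obtain ⟨q, -, hqeq⟩ := Finset.mem_image.mp (u.min'_mem hune)
            rw [← hpeq, ← hqeq]
            exact hcross p q
          refine ⟨(l.max' hlne + u.min' hune) / 2, fun p => ?_, fun q => ?_⟩
          · have := Finset.le_max' l _ (Finset.mem_image_of_mem
              (fun p : P => -(d p.1) / ((v p.1 0 : ℤ) : ℚ)) (Finset.mem_univ p))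
            linarith
          · have := Finset.min'_le u _ (Finset.mem_image_of_mem
              (fun q : N => d q.1 / ((-(v q.1 0) : ℤ) : ℚ)) (Finset.mem_univ q))
            linarith
    obtain ⟨t, htP, htN⟩ := ht
    refine ⟨Fin.cons t w', fun i => ?_⟩
    rw [Fin.sum_univ_succ]
    simp only [Fin.cons_zero, Fin.cons_succ]
    have hdi : ∑ k, w' k * ((v i k.succ : ℤ) : ℚ) = d i := rfl
    rw [hdi]
    rcases lt_trichotomy (v i 0) 0 with hvi | hvi | hvi
    · have h1 := htN ⟨i, hvi⟩
      have h2 : (0 : ℚ) < ((-(v i 0) : ℤ) : ℚ) := by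
        push_cast
        linarith [show ((v i 0 : ℤ) : ℚ) < 0 by exact_mod_cast hvi]
      rw [lt_div_iff₀ h2] at h1
      push_cast at h1 ⊢
      nlinarith
    · rw [hvi]
      push_cast
      simpa using hz ⟨i, hvi⟩
    · have h1 := htP ⟨i, hvi⟩
      have h2 : (0 : ℚ) < ((v i 0 : ℤ) : ℚ) := by exact_mod_cast hvi
      rw [div_lt_iff₀ h2] at h1
      push_cast at h1 ⊢
      nlinarith

/-- Every monomial order can be represented on a finite set of exponent
vectors by a single strictly positive weight vector: `u ≺ t` implies
`w·u < w·t` for `u, t ∈ S`, and consequently for distinct `u, t ∈ S` we have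
`u ≺ t` if and only if `w·u < w·t`. -/
theorem monomialOrder_represented_by_weight_vector {n : ℕ}
    (m : MonomialOrder (Fin n)) (S : Finset (Fin n →₀ ℕ)) :
    ∃ w : Fin n → ℕ, (∀ k, 0 < w k) ∧
      (∀ u ∈ S, ∀ t ∈ S, (u ≺[m] t) → ∑ k, w k * u k < ∑ k, w k * t k) ∧
      (∀ u ∈ S, ∀ t ∈ S, u ≠ t →
        ((u ≺[m] t) ↔ ∑ k, w k * u k < ∑ k, w k * t k)) := by
  classical
  set Pairs := {p : S × S // ((p.1 : Fin n →₀ ℕ) ≺[m] (p.2 : Fin n →₀ ℕ))} with hPairs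
  set ι := Pairs ⊕ Fin n with hι
  set v : ι → Fin n → ℤ := fun i k =>
    match i with
    | .inl p => ((p.1.2 : Fin n →₀ ℕ) k : ℤ) - ((p.1.1 : Fin n →₀ ℕ) k : ℤ)
    | .inr j => if j = k then 1 else 0
    with hv
  have hsplit : ∀ (a : ι → ℕ) (k : Fin n), ∑ i : ι, (a i : ℤ) * v i k =
      (∑ p : Pairs, (a (.inl p) : ℤ) *
        (((p.1.2 : Fin n →₀ ℕ) k : ℤ) - ((p.1.1 : Fin n →₀ ℕ) k : ℤ)))
      + (a (.inr k) : ℤ) := by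
    intro a k
    rw [Fintype.sum_sum_type]
    congr 1
    have : ∀ j : Fin n, (a (.inr j) : ℤ) * v (.inr j) k
        = if j = k then (a (.inr j) : ℤ) else 0 := by
      intro j
      by_cases h : j = k <;> simp [hv, h]
    rw [Finset.sum_congr rfl (fun j _ => this j)]
    simp
  have H : ∀ a : ι → ℕ, (∀ k, ∑ i, (a i : ℤ) * v i k ≤ 0) → ∀ i, a i = 0 := by
    intro a ha
    have hep : ∀ p : Pairs, a (.inl p) = 0 := by
      by_contra hcon
      push_neg at hcon
      obtain ⟨p0, hp0⟩ := hcon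
      set A : Fin n →₀ ℕ := ∑ p : Pairs, a (.inl p) • (p.1.1 : Fin n →₀ ℕ) with hA
      set B : Fin n →₀ ℕ := ∑ p : Pairs, a (.inl p) • (p.1.2 : Fin n →₀ ℕ) with hB
      have hBA : B ≤ A := by
        rw [Finsupp.le_def]
        intro k
        have h1 := ha k
        rw [hsplit a k] at h1
        simp only [mul_sub, Finset.sum_sub_distrib] at h1
        have h2 : (0 : ℤ) ≤ (a (.inr k) : ℤ) := Int.natCast_nonneg _
        have h3 : (∑ p : Pairs, (a (.inl p) : ℤ) * ((p.1.2 : Fin n →₀ ℕ) k : ℤ))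
            ≤ ∑ p : Pairs, (a (.inl p) : ℤ) * ((p.1.1 : Fin n →₀ ℕ) k : ℤ) := by
          linarith
        have hBk : (B k : ℤ) = ∑ p : Pairs, (a (.inl p) : ℤ) *
            ((p.1.2 : Fin n →₀ ℕ) k : ℤ) := by
          rw [hB]
          push_cast [Finsupp.finset_sum_apply, Finsupp.smul_apply]
          rfl
        have hAk : (A k : ℤ) = ∑ p : Pairs, (a (.inl p) : ℤ) *
            ((p.1.1 : Fin n →₀ ℕ) k : ℤ) := by
          rw [hA]
          push_cast [Finsupp.finset_sum_apply, Finsupp.smul_apply]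
          rfl
        have : (B k : ℤ) ≤ (A k : ℤ) := by rw [hBk, hAk]; exact h3
        exact_mod_cast this
      have hle : m.toSyn B ≤ m.toSyn A := m.toSyn_monotone hBA
      have hlt : m.toSyn A < m.toSyn B := by
        rw [hA, hB, map_sum, map_sum]
        simp only [map_nsmul]
        apply Finset.sum_lt_sum
        · intro p _
          exact nsmul_le_nsmul_right p.2.le _
        · exact ⟨p0, Finset.mem_univ _, nsmul_lt_nsmul_right hp0 p0.2⟩
      exact absurd hle (not_le.mpr hlt)
    intro i
    cases i with
    | inl p => exact hep p
    | inr j =>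
      have h1 := ha j
      rw [hsplit a j] at h1
      have h2 : ∀ p : Pairs, (a (Sum.inl p) : ℤ) *
          (((p.1.2 : Fin n →₀ ℕ) j : ℤ) - ((p.1.1 : Fin n →₀ ℕ) j : ℤ)) = 0 := by
        intro p
        rw [show (a (Sum.inl p) : ℤ) = 0 from by exact_mod_cast hep p]
        ring
      rw [Finset.sum_eq_zero (fun p _ => h2 p)] at h1
      omega
  obtain ⟨w, hw⟩ := gordan n ι v H
  have hwpos : ∀ j, 0 < w j := by
    intro j
    have h := hw (.inr j)
    have heq : ∑ k, w k * ((v (.inr j) k : ℤ) : ℚ) = w j := by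
      have : ∀ k : Fin n, w k * ((v (.inr j) k : ℤ) : ℚ)
          = if j = k then w k else 0 := by
        intro k
        by_cases hjk : j = k <;> simp [hv, hjk]
      rw [Finset.sum_congr rfl (fun k _ => this k)]
      simp
    rwa [heq] at h
  have hwlt : ∀ u ∈ S, ∀ t ∈ S, (u ≺[m] t) →
      ∑ k, w k * (u k : ℚ) < ∑ k, w k * (t k : ℚ) := by
    intro u hu t ht hut
    have h := hw (.inl ⟨(⟨u, hu⟩, ⟨t, ht⟩), hut⟩)
    have heq : ∑ k, w k * ((v (.inl ⟨(⟨u, hu⟩, ⟨t, ht⟩), hut⟩) k : ℤ) : ℚ)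
        = ∑ k, w k * (t k : ℚ) - ∑ k, w k * (u k : ℚ) := by
      rw [← Finset.sum_sub_distrib]
      apply Finset.sum_congr rfl
      intro k _
      show w k * (((t k : ℤ) - (u k : ℤ) : ℤ) : ℚ) = _
      push_cast
      ring
    rw [heq] at h
    linarith
  set D : ℕ := ∏ k, (w k).den with hD
  have hDpos : 0 < D := Finset.prod_pos (fun k _ => (w k).pos)
  set W : Fin n → ℕ := fun k => (w k).num.toNat * (D / (w k).den) with hW
  have hWcast : ∀ k, (W k : ℚ) = w k * D := by
    intro k
    have hdvd : (w k).den ∣ D := Finset.dvd_prod_of_mem _ (Finset.mem_univ k)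
    have hnum : 0 < (w k).num := Rat.num_pos.mpr (hwpos k)
    have hden : ((w k).den : ℚ) ≠ 0 := by
      exact_mod_cast (w k).den_nz
    have hnumeq : ((w k).num : ℚ) = w k * (w k).den := by
      have h := Rat.num_div_den (w k)
      rwa [div_eq_iff hden] at h
    calc (W k : ℚ) = ((w k).num : ℚ) * ((D / (w k).den : ℕ) : ℚ) := by
          have h1 : (((w k).num.toNat : ℕ) : ℚ) = ((w k).num : ℚ) := by
            exact_mod_cast Int.toNat_of_nonneg hnum.le
          rw [hW, Nat.cast_mul, h1]
      _ = ((w k).num : ℚ) * ((D : ℚ) / ((w k).den : ℚ)) := by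
          rw [Nat.cast_div hdvd hden]
      _ = w k * (w k).den * ((D : ℚ) / ((w k).den : ℚ)) := by rw [hnumeq]
      _ = w k * D := by
          field_simp
  have hWpos : ∀ k, 0 < W k := by
    intro k
    have hdvd : (w k).den ∣ D := Finset.dvd_prod_of_mem _ (Finset.mem_univ k)
    have hnum : 0 < (w k).num := Rat.num_pos.mpr (hwpos k)
    exact Nat.mul_pos (by omega) (Nat.div_pos (Nat.le_of_dvd hDpos hdvd) (w k).pos)
  have main : ∀ u ∈ S, ∀ t ∈ S, (u ≺[m] t) →
      ∑ k, W k * u k < ∑ k, W k * t k := by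
    intro u hu t ht hut
    have h := hwlt u hu t ht hut
    have hq : ∑ k, (W k : ℚ) * (u k : ℚ) < ∑ k, (W k : ℚ) * (t k : ℚ) := by
      simp only [hWcast]
      have e1 : ∑ k, w k * (D : ℚ) * (u k : ℚ) = (D : ℚ) * ∑ k, w k * (u k : ℚ) := by
        rw [Finset.mul_sum]
        apply Finset.sum_congr rfl
        intro k _
        ring
      have e2 : ∑ k, w k * (D : ℚ) * (t k : ℚ) = (D : ℚ) * ∑ k, w k * (t k : ℚ) := by
        rw [Finset.mul_sum]
        apply Finset.sum_congr rfl
        intro k _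
        ring
      rw [e1, e2]
      have : (0 : ℚ) < D := by exact_mod_cast hDpos
      exact mul_lt_mul_of_pos_left h this
    exact_mod_cast hq
  refine ⟨W, hWpos, main, ?_⟩
  intro u hu t ht hne
  constructor
  · exact main u hu t ht
  · intro h
    rcases lt_trichotomy (m.toSyn u) (m.toSyn t) with h1 | h1 | h1
    · exact h1
    · exact absurd (m.toSyn.injective h1) hne
    · exact absurd (main t ht u hu h1) (by omega)
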